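/- Let λ, M be reals with M > λ > 1, Ω ≥ 0, |I₀| ≥ 0, and consider two message sequences m, m' : ℕ → Fin M with quantizer estimates x̂(m,t) satisfying the recursion x̂(m,t+1) = λ·x̂(m,t) + ((λ·ℓ(t)+Ω)/2)·((2·m(t+1)+1)/M − 1), where ℓ(t) is the quantizer interval length at time t. If at some time T, |x̂(m,T) − x̂(m',T)| ≥ (Ω/(M−λ))·((M−1)/(λ−1)) + ℓ(T), then for all t ≥ 0, |x̂(m, T+t) − x̂(m', T+t)| ≥ ℓ(T+t). -/

import Mathlib

set_option maxHeartbeats 800000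


theorem stmt_13 (lam Ω I0 : ℝ) (Mn : ℕ) (hlam : 1 < lam) (hM : lam < (Mn : ℝ))
    (hΩ : 0 ≤ Ω) (hI : 0 ≤ I0) (ℓ : ℕ → ℝ)
    (hℓ : ∀ t, ℓ t = (lam / Mn) ^ t * (I0 / Mn - Ω / ((Mn : ℝ) - lam))
      + Ω / ((Mn : ℝ) - lam))
    (m m' : ℕ → Fin Mn) (xh xh' : ℕ → ℝ)
    (hrec : ∀ t, xh (t + 1) = lam * xh t +
      ((lam * ℓ t + Ω) / 2) * ((2 * ((m (t + 1) : ℕ) : ℝ) + 1) / Mn - 1))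
    (hrec' : ∀ t, xh' (t + 1) = lam * xh' t +
      ((lam * ℓ t + Ω) / 2) * ((2 * ((m' (t + 1) : ℕ) : ℝ) + 1) / Mn - 1))
    (T : ℕ)
    (hsep : |xh T - xh' T| ≥
      (Ω / ((Mn : ℝ) - lam)) * (((Mn : ℝ) - 1) / (lam - 1)) + ℓ T) :
    ∀ t, |xh (T + t) - xh' (T + t)| ≥ ℓ (T + t) := by
  have hM0 : (0:ℝ) < (Mn:ℝ) := lt_trans (lt_trans one_pos hlam) hM
  have hMl : (0:ℝ) < (Mn:ℝ) - lam := by linarith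
  have hl1 : (0:ℝ) < lam - 1 := by linarith
  have hlam0 : (0:ℝ) < lam := by linarith
  have hrpos : (0:ℝ) < lam / Mn := by positivity
  have hrle : lam / (Mn:ℝ) ≤ 1 := by rw [div_le_one hM0]; linarith
  have hℓnn : ∀ t, 0 ≤ ℓ t := by
    intro t
    rw [hℓ]
    rcases le_or_gt 0 (I0 / Mn - Ω / ((Mn:ℝ) - lam)) with h | h
    · have h1 : 0 ≤ (lam/Mn)^t * (I0 / Mn - Ω / ((Mn:ℝ) - lam)) :=
        mul_nonneg (by positivity) h
      have hB : 0 ≤ Ω / ((Mn:ℝ) - lam) := div_nonneg hΩ hMl.le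
      linarith
    · have hpow : (lam/(Mn:ℝ))^t ≤ 1 := pow_le_one₀ hrpos.le hrle
      have h2 : (lam/(Mn:ℝ))^t * (I0/Mn - Ω/((Mn:ℝ)-lam)) ≥ I0/Mn - Ω/((Mn:ℝ)-lam) := by
        nlinarith [pow_nonneg hrpos.le t]
      have hI0 : 0 ≤ I0 / (Mn:ℝ) := div_nonneg hI hM0.le
      linarith
  have hℓstep : ∀ t, ℓ (t+1) = (lam / Mn) * ℓ t + Ω / Mn := by
    intro t
    rw [hℓ, hℓ]
    rw [pow_succ]
    have hB : lam / Mn * (Ω / ((Mn:ℝ) - lam)) + Ω / Mn = Ω / ((Mn:ℝ) - lam) := by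
      rw [div_mul_div_comm, div_add_div _ _ (mul_ne_zero hM0.ne' hMl.ne') hM0.ne',
        div_eq_div_iff (mul_ne_zero (mul_ne_zero hM0.ne' hMl.ne') hM0.ne') hMl.ne']
      ring
    linear_combination (-1 : ℝ) * hB
  set C : ℝ := Ω / ((Mn:ℝ) - lam) * (((Mn:ℝ) - 1) / (lam - 1)) with hCdef
  have hC0 : 0 ≤ C :=
    mul_nonneg (div_nonneg hΩ hMl.le) (div_nonneg (by linarith) hl1.le)
  have hCΩ : Ω ≤ C * (lam - 1) := by
    have h1 : C * (lam - 1) = Ω * ((Mn:ℝ) - 1) / ((Mn:ℝ) - lam) := by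
      rw [hCdef]; field_simp
    rw [h1, le_div_iff₀ hMl]
    nlinarith
  have key : ∀ t, |xh (T+t) - xh' (T+t)| ≥ C + ℓ (T+t) := by
    intro t
    induction t with
    | zero => simpa using hsep
    | succ t ih =>
      have hs : T + (t+1) = (T+t) + 1 := rfl
      rw [hs]
      set s := T + t with hsdef
      set a : ℝ := ((m (s+1) : ℕ) : ℝ) with hadef
      set b : ℝ := ((m' (s+1) : ℕ) : ℝ) with hbdef
      have ha1 : a ≤ (Mn:ℝ) - 1 := by
        have h1 : ((m (s+1) : ℕ) + 1 : ℕ) ≤ Mn := (m (s+1)).isLt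
        have h2 := Nat.cast_le (α := ℝ).mpr h1
        push_cast at h2
        linarith
      have hb1 : b ≤ (Mn:ℝ) - 1 := by
        have h1 : ((m' (s+1) : ℕ) + 1 : ℕ) ≤ Mn := (m' (s+1)).isLt
        have h2 := Nat.cast_le (α := ℝ).mpr h1
        push_cast at h2
        linarith
      have ha0 : 0 ≤ a := Nat.cast_nonneg _
      have hb0 : 0 ≤ b := Nat.cast_nonneg _
      have habs : |a - b| ≤ (Mn:ℝ) - 1 := by
        rw [abs_le]; constructor <;> linarith
      have hcoef : 0 ≤ lam * ℓ s + Ω := by nlinarith [hℓnn s]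
      set e : ℝ := ((lam * ℓ s + Ω)/2) * (2 * (a - b) / Mn) with hedef
      have hd : xh (s+1) - xh' (s+1) = lam * (xh s - xh' s) + e := by
        rw [hrec, hrec', hedef]
        ring
      have he : |e| ≤ (lam * ℓ s + Ω) * ((Mn:ℝ) - 1) / Mn := by
        rw [hedef, abs_mul, abs_of_nonneg (by positivity : (0:ℝ) ≤ (lam * ℓ s + Ω)/2)]
        have h2 : |2 * (a - b) / (Mn:ℝ)| ≤ 2 * ((Mn:ℝ) - 1) / Mn := by
          rw [abs_div, abs_of_nonneg hM0.le, div_le_div_iff_of_pos_right hM0, abs_mul]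
          rw [abs_of_nonneg (by norm_num : (0:ℝ) ≤ 2)]
          nlinarith
        calc ((lam * ℓ s + Ω)/2) * |2 * (a - b) / (Mn:ℝ)|
            ≤ ((lam * ℓ s + Ω)/2) * (2 * ((Mn:ℝ) - 1) / Mn) :=
              mul_le_mul_of_nonneg_left h2 (by positivity)
          _ = (lam * ℓ s + Ω) * ((Mn:ℝ) - 1) / Mn := by ring
      have h4 : |lam * (xh s - xh' s)| - |e| ≤ |xh (s+1) - xh' (s+1)| := by
        have h5 := abs_add_le (lam * (xh s - xh' s) + e) (-e)
        simp only [add_neg_cancel_right, abs_neg] at h5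
        rw [hd]
        linarith
      have h6 : |lam * (xh s - xh' s)| = lam * |xh s - xh' s| := by
        rw [abs_mul, abs_of_pos hlam0]
      have expand : lam * (C + ℓ s) - (lam * ℓ s + Ω) * ((Mn:ℝ) - 1) / Mn
          - (C + ((lam/Mn) * ℓ s + Ω / Mn)) = C * (lam - 1) - Ω := by
        field_simp
        ring
      rw [hℓstep]
      rw [h6] at h4
      have h7 : lam * |xh s - xh' s| ≥ lam * (C + ℓ s) :=
        mul_le_mul_of_nonneg_left ih hlam0.le
      linarith
  intro t
  linarith [key t, hC0]
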